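/- Let D = (D₁,...,D_m) be an m-tuple of n×n real diagonal matrices (viewed as Hermitian matrices), let L : (H_n)^m → ℝ³ be a linear map, and let U ∈ U_n be unitary. Then the set E_L(D,U) := { L(U*T*_{θ,φ} D₁ T_{θ,φ} U, ..., U*T*_{θ,φ} D_m T_{θ,φ} U) : θ ∈ [0,π], φ ∈ [0,2π] } is the image of the unit sphere S² = {x ∈ ℝ³ : ‖x‖ = 1} under some affine map from ℝ³ to ℝ³ (i.e., E_L(D,U) is an ellipsoid, possibly degenerate). -/

import Mathlib

open Matrix

/-- The unitary matrix `T_{θ,φ}` whose leading 2×2 block is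
`[[cos θ, sin θ · e^{iφ}], [−sin θ, cos θ · e^{iφ}]]` and which is the identity elsewhere. -/
noncomputable def Tmat (n : ℕ) (θ φ : ℝ) : Matrix (Fin n) (Fin n) ℂ :=
  Matrix.of fun i j =>
    if (i : ℕ) = 0 ∧ (j : ℕ) = 0 then (Real.cos θ : ℂ)
    else if (i : ℕ) = 0 ∧ (j : ℕ) = 1 then (Real.sin θ : ℂ) * Complex.exp (Complex.I * φ)
    else if (i : ℕ) = 1 ∧ (j : ℕ) = 0 then -(Real.sin θ : ℂ)
    else if (i : ℕ) = 1 ∧ (j : ℕ) = 1 then (Real.cos θ : ℂ) * Complex.exp (Complex.I * φ)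
    else if i = j then 1 else 0

/-- The set `E_L(D,U) = { L(U*T*_{θ,φ}D₁T_{θ,φ}U, ..., U*T*_{θ,φ}D_mT_{θ,φ}U) :
θ ∈ [0,π], φ ∈ [0,2π] }`. -/
noncomputable def Eset {n m : ℕ}
    (L : (Fin m → Matrix (Fin n) (Fin n) ℂ) →ₗ[ℝ] (Fin 3 → ℝ))
    (D : Fin m → Matrix (Fin n) (Fin n) ℂ)
    (U : Matrix (Fin n) (Fin n) ℂ) : Set (Fin 3 → ℝ) :=
  {y | ∃ θ ∈ Set.Icc (0 : ℝ) Real.pi, ∃ φ ∈ Set.Icc (0 : ℝ) (2 * Real.pi),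
    y = L fun i => Uᴴ * (Tmat n θ φ)ᴴ * D i * Tmat n θ φ * U}

lemma sum_fin {n : ℕ} (g : Fin n → ℂ) (hg : ∀ k : Fin n, 2 ≤ (k:ℕ) → g k = 0) :
    ∑ k, g k = (if h : 0 < n then g ⟨0,h⟩ else 0) + (if h : 1 < n then g ⟨1,h⟩ else 0) := by
  match n with
  | 0 => simp
  | 1 => simp [Fin.sum_univ_succ]
  | (N+2) =>
    rw [Fin.sum_univ_succ, Fin.sum_univ_succ]
    have h2 : ∀ k : Fin N, g k.succ.succ = 0 := fun k => hg _ (by simp [Fin.val_succ])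
    simp only [h2, Finset.sum_const_zero, add_zero]
    rw [dif_pos (by omega : 0 < N + 2), dif_pos (by omega : 1 < N + 2)]
    rfl

lemma Tmat_col_ge {n : ℕ} {θ φ : ℝ} {k q : Fin n} (hq : 2 ≤ (q:ℕ)) :
    Tmat n θ φ k q = if k = q then 1 else 0 := by
  simp only [Tmat, Matrix.of_apply]
  split_ifs with h1 h2 h3 h4 <;> first | rfl | omega

lemma Tmat_row_ge {n : ℕ} {θ φ : ℝ} {k q : Fin n} (hk : 2 ≤ (k:ℕ)) :
    Tmat n θ φ k q = if k = q then 1 else 0 := by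
  simp only [Tmat, Matrix.of_apply]
  split_ifs with h1 h2 h3 h4 <;> first | rfl | omega

noncomputable section

variable {n : ℕ}

def aval (dv : Fin n → ℝ) : ℝ := if h : 0 < n then dv ⟨0, h⟩ else 0
def bval (dv : Fin n → ℝ) : ℝ := if h : 1 < n then dv ⟨1, h⟩ else 0

def Cm (dv : Fin n → ℝ) : Matrix (Fin n) (Fin n) ℂ :=
  Matrix.of fun p q =>
    if p = q then
      (if (p:ℕ) = 0 ∨ (p:ℕ) = 1 then (((aval dv + bval dv)/2 : ℝ) : ℂ) else (dv p : ℂ))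
    else 0

def Xm (dv : Fin n → ℝ) : Matrix (Fin n) (Fin n) ℂ :=
  Matrix.of fun p q =>
    if ((p:ℕ) = 0 ∧ (q:ℕ) = 1) ∨ ((p:ℕ) = 1 ∧ (q:ℕ) = 0) then (((aval dv - bval dv)/2 : ℝ) : ℂ)
    else 0

def Ym (dv : Fin n → ℝ) : Matrix (Fin n) (Fin n) ℂ :=
  Matrix.of fun p q =>
    if (p:ℕ) = 0 ∧ (q:ℕ) = 1 then Complex.I * (((aval dv - bval dv)/2 : ℝ) : ℂ)
    else if (p:ℕ) = 1 ∧ (q:ℕ) = 0 then -(Complex.I * (((aval dv - bval dv)/2 : ℝ) : ℂ)) else 0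

def Zm (dv : Fin n → ℝ) : Matrix (Fin n) (Fin n) ℂ :=
  Matrix.of fun p q =>
    if (p:ℕ) = 0 ∧ (q:ℕ) = 0 then (((aval dv - bval dv)/2 : ℝ) : ℂ)
    else if (p:ℕ) = 1 ∧ (q:ℕ) = 1 then ((-((aval dv - bval dv)/2) : ℝ) : ℂ) else 0

lemma key (θ φ : ℝ) (dv : Fin n → ℝ) :
    (Tmat n θ φ)ᴴ * Matrix.diagonal (fun j => (dv j : ℂ)) * Tmat n θ φ =
      Cm dv + (Real.sin (2*θ) * Real.cos φ) • Xm dv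
        + (Real.sin (2*θ) * Real.sin φ) • Ym dv + Real.cos (2*θ) • Zm dv := by
  ext p q
  rw [Matrix.mul_assoc, Matrix.mul_apply]
  simp only [Matrix.conjTranspose_apply, Matrix.diagonal_mul]
  by_cases hp : 2 ≤ (p:ℕ)
  · have h0 : ¬ (p:ℕ) = 0 := by omega
    have h1 : ¬ (p:ℕ) = 1 := by omega
    rw [Finset.sum_eq_single p (fun k _ hk => by simp [Tmat_col_ge hp, hk]) (by simp)]
    simp only [Tmat_row_ge hp, if_pos rfl, star_one, one_mul]
    by_cases hpq : p = q
    · subst hpq; simp [Cm, Xm, Ym, Zm, h0, h1, Matrix.add_apply, Matrix.smul_apply]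
    · simp [Cm, Xm, Ym, Zm, hpq, h0, h1, Matrix.add_apply, Matrix.smul_apply]
  · by_cases hq : 2 ≤ (q:ℕ)
    · have hq0 : ¬ (q:ℕ) = 0 := by omega
      have hq1 : ¬ (q:ℕ) = 1 := by omega
      have hpq : p ≠ q := by intro h; rw [h] at hp; exact hp hq
      rw [Finset.sum_eq_zero (fun k _ => by
        by_cases hk : 2 ≤ (k:ℕ)
        · simp [Tmat_row_ge hk, show ¬ k = p from fun h => by subst h; omega]
        · simp [Tmat_col_ge hq, show ¬ k = q from fun h => by subst h; omega])]
      simp [Cm, Xm, Ym, Zm, hq0, hq1, hpq]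
    · rw [sum_fin _ (fun k hk => by
        simp [Tmat_row_ge hk, show ¬ k = p from fun h => by subst h; omega])]
      have hn0 : 0 < n := Fin.pos p
      rw [dif_pos hn0]
      have hs : (Real.sin θ : ℂ)^2 = 1 - (Real.cos θ : ℂ)^2 := by
        have := Real.sin_sq θ; exact_mod_cast congrArg (Complex.ofReal ·) this
      have hφs : (Real.sin φ : ℂ)^2 = 1 - (Real.cos φ : ℂ)^2 := by
        have := Real.sin_sq φ; exact_mod_cast congrArg (Complex.ofReal ·) this
      have he : Complex.exp (Complex.I * φ) = ↑(Real.cos φ) + ↑(Real.sin φ) * Complex.I := by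
        rw [mul_comm, Complex.exp_mul_I, ← Complex.ofReal_cos, ← Complex.ofReal_sin]
      have hc : (starRingEnd ℂ) (Complex.cos (θ:ℂ)) = Complex.cos (θ:ℂ) := by
        rw [← Complex.ofReal_cos]; exact Complex.conj_ofReal _
      have hsn : (starRingEnd ℂ) (Complex.sin (θ:ℂ)) = Complex.sin (θ:ℂ) := by
        rw [← Complex.ofReal_sin]; exact Complex.conj_ofReal _
      have hcφ : (starRingEnd ℂ) (Complex.cos (φ:ℂ)) = Complex.cos (φ:ℂ) := by
        rw [← Complex.ofReal_cos]; exact Complex.conj_ofReal _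
      have hsφ : (starRingEnd ℂ) (Complex.sin (φ:ℂ)) = Complex.sin (φ:ℂ) := by
        rw [← Complex.ofReal_sin]; exact Complex.conj_ofReal _
      push_cast at hs hφs
      have hp01 : (p:ℕ) = 0 ∨ (p:ℕ) = 1 := by omega
      have hq01 : (q:ℕ) = 0 ∨ (q:ℕ) = 1 := by omega
      rcases hp01 with hp0 | hp1 <;> rcases hq01 with hq0 | hq1
      · -- (0,0)
        have hpq : p = q := Fin.ext (by omega)
        by_cases hn1 : 1 < n
        · rw [dif_pos hn1]
          simp only [Tmat, Matrix.of_apply, Cm, Xm, Ym, Zm, Matrix.add_apply,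
            Matrix.smul_apply, aval, bval, dif_pos hn0, dif_pos hn1, hp0, hq0, hpq]
          norm_num [Complex.star_def, Complex.conj_ofReal, hc, hsn, hcφ, hsφ, Complex.real_smul, Real.cos_two_mul]
          push_cast
          linear_combination (dv ⟨1,hn1⟩ : ℂ) * hs
        · rw [dif_neg hn1]
          simp only [Tmat, Matrix.of_apply, Cm, Xm, Ym, Zm, Matrix.add_apply,
            Matrix.smul_apply, aval, bval, dif_pos hn0, dif_neg hn1, hp0, hq0, hpq]
          norm_num [Complex.star_def, Complex.conj_ofReal, hc, hsn, hcφ, hsφ, Complex.real_smul, Real.cos_two_mul]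
          push_cast
          ring
      · -- (0,1)
        have hn1 : 1 < n := hq1 ▸ q.isLt
        have hpq : ¬ p = q := fun h => by subst h; omega
        rw [dif_pos hn1]
        simp only [Tmat, Matrix.of_apply, Cm, Xm, Ym, Zm, Matrix.add_apply,
          Matrix.smul_apply, aval, bval, dif_pos hn0, dif_pos hn1, hp0, hq1, hpq, he]
        norm_num [Complex.star_def, Complex.conj_ofReal, hc, hsn, hcφ, hsφ, Complex.real_smul, Real.sin_two_mul]
        push_cast
        ring
      · -- (1,0)
        have hn1 : 1 < n := hp1 ▸ p.isLt
        have hpq : ¬ p = q := fun h => by subst h; omega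
        rw [dif_pos hn1]
        simp only [Tmat, Matrix.of_apply, Cm, Xm, Ym, Zm, Matrix.add_apply,
          Matrix.smul_apply, aval, bval, dif_pos hn0, dif_pos hn1, hp1, hq0, hpq, he]
        norm_num [Complex.star_def, Complex.conj_ofReal, Complex.conj_I, hc, hsn, hcφ, hsφ, map_add, _root_.map_mul,
          Complex.real_smul, Real.sin_two_mul]
        push_cast
        ring
      · -- (1,1)
        have hn1 : 1 < n := hp1 ▸ p.isLt
        have hpq : p = q := Fin.ext (by omega)
        rw [dif_pos hn1]
        simp only [Tmat, Matrix.of_apply, Cm, Xm, Ym, Zm, Matrix.add_apply,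
          Matrix.smul_apply, aval, bval, dif_pos hn0, dif_pos hn1, hp1, hq1, hpq, he]
        norm_num [Complex.star_def, Complex.conj_ofReal, Complex.conj_I, hc, hsn, hcφ, hsφ, map_add, _root_.map_mul,
          Complex.real_smul, Real.cos_two_mul]
        push_cast
        linear_combination ((dv ⟨0,hn0⟩ : ℂ) * Complex.sin (θ:ℂ)^2 + (dv ⟨1,hn1⟩ : ℂ) * Complex.cos (θ:ℂ)^2) * hφs + (dv ⟨0,hn0⟩ : ℂ) * hs + (-(((dv ⟨0,hn0⟩ : ℂ) * Complex.sin (θ:ℂ)^2 + (dv ⟨1,hn1⟩ : ℂ) * Complex.cos (θ:ℂ)^2) * Complex.sin (φ:ℂ)^2)) * Complex.I_sq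

end

lemma sphere_vec (x y z : ℝ) (h : x^2+y^2+z^2 = 1) :
    (WithLp.equiv 2 (Fin 3 → ℝ)).symm ![x,y,z] ∈
      Metric.sphere (0 : EuclideanSpace ℝ (Fin 3)) 1 := by
  rw [mem_sphere_zero_iff_norm, EuclideanSpace.norm_eq]
  simp only [WithLp.equiv_symm_apply, PiLp.toLp_apply, WithLp.ofLp_toLp, Fin.sum_univ_three, Real.norm_eq_abs, sq_abs,
    Matrix.cons_val_zero, Matrix.cons_val_one, Matrix.head_cons, Matrix.cons_val_two,
    Matrix.tail_cons]
  rw [h, Real.sqrt_one]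


set_option maxHeartbeats 1000000 in
/-- For a tuple of real diagonal matrices `D` and any unitary `U`, the set `E_L(D,U)` is an
(ellipsoid, i.e. the) image of the unit sphere `S² ⊆ ℝ³` under an affine map. -/
theorem stmt2 {n m : ℕ} (d : Fin m → Fin n → ℝ)
    (L : (Fin m → Matrix (Fin n) (Fin n) ℂ) →ₗ[ℝ] (Fin 3 → ℝ))
    (U : Matrix (Fin n) (Fin n) ℂ) (hU : U ∈ Matrix.unitaryGroup (Fin n) ℂ) :
    ∃ f : EuclideanSpace ℝ (Fin 3) →ᵃ[ℝ] (Fin 3 → ℝ),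
      Eset L (fun i => Matrix.diagonal fun j => (d i j : ℂ)) U =
        f '' Metric.sphere (0 : EuclideanSpace ℝ (Fin 3)) 1 := by
  classical
  set CC : Fin m → Matrix (Fin n) (Fin n) ℂ := fun i => Uᴴ * Cm (d i) * U with hCC
  set XX : Fin m → Matrix (Fin n) (Fin n) ℂ := fun i => Uᴴ * Xm (d i) * U with hXX
  set YY : Fin m → Matrix (Fin n) (Fin n) ℂ := fun i => Uᴴ * Ym (d i) * U with hYY
  set ZZ : Fin m → Matrix (Fin n) (Fin n) ℂ := fun i => Uᴴ * Zm (d i) * U with hZZ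
  set lin0 : EuclideanSpace ℝ (Fin 3) →ₗ[ℝ] (Fin m → Matrix (Fin n) (Fin n) ℂ) :=
    { toFun := fun v => fun i => v 0 • XX i + v 1 • YY i + v 2 • ZZ i
      map_add' := by
        intro u v; funext i
        show (u + v) 0 • XX i + (u + v) 1 • YY i + (u + v) 2 • ZZ i = _
        simp only [PiLp.add_apply, add_smul, Pi.add_apply]
        abel
      map_smul' := by
        intro c v; funext i
        show (c • v) 0 • XX i + (c • v) 1 • YY i + (c • v) 2 • ZZ i = _
        simp only [PiLp.smul_apply, smul_eq_mul, smul_smul, RingHom.id_apply, Pi.smul_apply,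
          smul_add]
         } with hlin0
  set f : EuclideanSpace ℝ (Fin 3) →ᵃ[ℝ] (Fin 3 → ℝ) :=
    { toFun := fun v => L CC + L (lin0 v)
      linear := L ∘ₗ lin0
      map_vadd' := by
        intro p v
        simp only [vadd_eq_add, map_add, LinearMap.comp_apply]
        abel } with hf
  have hfapp : ∀ v : EuclideanSpace ℝ (Fin 3), f v = L CC + L (lin0 v) := fun v => rfl
  refine ⟨f, ?_⟩
  have hpoint : ∀ θ φ : ℝ,
      (L fun i => Uᴴ * (Tmat n θ φ)ᴴ * Matrix.diagonal (fun j => (d i j : ℂ)) * Tmat n θ φ * U)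
        = f ((WithLp.equiv 2 (Fin 3 → ℝ)).symm
            ![Real.sin (2*θ) * Real.cos φ, Real.sin (2*θ) * Real.sin φ, Real.cos (2*θ)]) := by
    intro θ φ
    have hM : ∀ i, Uᴴ * (Tmat n θ φ)ᴴ * Matrix.diagonal (fun j => (d i j : ℂ)) * Tmat n θ φ * U
        = CC i + (Real.sin (2*θ) * Real.cos φ) • XX i + (Real.sin (2*θ) * Real.sin φ) • YY i
          + Real.cos (2*θ) • ZZ i := by
      intro i
      have hk := key (n := n) θ φ (d i)
      calc Uᴴ * (Tmat n θ φ)ᴴ * Matrix.diagonal (fun j => (d i j : ℂ)) * Tmat n θ φ * U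
          = Uᴴ * ((Tmat n θ φ)ᴴ * Matrix.diagonal (fun j => (d i j : ℂ)) * Tmat n θ φ) * U := by
            simp only [Matrix.mul_assoc]
        _ = _ := by
            rw [hk]
            simp only [hCC, hXX, hYY, hZZ, Matrix.mul_add, Matrix.add_mul,
              Matrix.mul_smul, Matrix.smul_mul, Matrix.mul_assoc]
    have hfun : (fun i => Uᴴ * (Tmat n θ φ)ᴴ * Matrix.diagonal (fun j => (d i j : ℂ))
          * Tmat n θ φ * U)
        = CC + (Real.sin (2*θ) * Real.cos φ) • XX + (Real.sin (2*θ) * Real.sin φ) • YY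
          + Real.cos (2*θ) • ZZ := by
      funext i
      simpa [Pi.add_apply, Pi.smul_apply] using hM i
    rw [hfun, hfapp]
    simp only [map_add, _root_.map_smul, hlin0, LinearMap.coe_mk, AddHom.coe_mk,
      WithLp.equiv_symm_apply, PiLp.toLp_apply, WithLp.ofLp_toLp, Matrix.cons_val_zero, Matrix.cons_val_one, Matrix.head_cons,
      Matrix.cons_val_two, Matrix.tail_cons]
    have : (fun i => (Real.sin (2*θ) * Real.cos φ) • XX i + (Real.sin (2*θ) * Real.sin φ) • YY i
          + Real.cos (2*θ) • ZZ i)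
        = (Real.sin (2*θ) * Real.cos φ) • XX + (Real.sin (2*θ) * Real.sin φ) • YY
          + Real.cos (2*θ) • ZZ := rfl
    rw [this]
    simp only [map_add, _root_.map_smul]
    abel
  ext y
  simp only [Eset, Set.mem_setOf_eq, Set.mem_image]
  constructor
  · rintro ⟨θ, hθ, φ, hφ, rfl⟩
    refine ⟨_, sphere_vec _ _ _ ?_, (hpoint θ φ).symm⟩
    have h1 := Real.sin_sq_add_cos_sq (2*θ)
    have h2 := Real.sin_sq_add_cos_sq φ
    nlinarith [h1, h2]
  · rintro ⟨v, hv, rfl⟩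
    have hn1 : ‖v‖ = 1 := by rwa [mem_sphere_zero_iff_norm] at hv
    have hv1 : (v 0)^2 + (v 1)^2 + (v 2)^2 = 1 := by
      rw [EuclideanSpace.norm_eq] at hn1
      have := Real.sqrt_eq_one.mp hn1
      simpa [Fin.sum_univ_three, Real.norm_eq_abs, sq_abs] using this
    have hz1 : -1 ≤ v 2 := by nlinarith
    have hz2 : v 2 ≤ 1 := by nlinarith
    set θ := Real.arccos (v 2) / 2 with hθdef
    have hθmem : θ ∈ Set.Icc (0:ℝ) Real.pi := by
      constructor
      · have := Real.arccos_nonneg (v 2); rw [hθdef]; linarith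
      · have := Real.arccos_le_pi (v 2); have hp := Real.pi_pos; rw [hθdef]; linarith
    have h2θ : 2*θ = Real.arccos (v 2) := by rw [hθdef]; ring
    set s := Real.sqrt ((v 0)^2 + (v 1)^2) with hsdef
    have hcos2 : Real.cos (2*θ) = v 2 := by rw [h2θ, Real.cos_arccos hz1 hz2]
    have hsin2 : Real.sin (2*θ) = s := by
      rw [h2θ, Real.sin_arccos, hsdef]; congr 1; nlinarith
    -- construct φ
    obtain ⟨φ, hφmem, hcφ, hsφ⟩ : ∃ φ ∈ Set.Icc (0:ℝ) (2*Real.pi),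
        s * Real.cos φ = v 0 ∧ s * Real.sin φ = v 1 := by
      by_cases hw : (v 0 : ℂ) + v 1 * Complex.I = 0
      · have h0 : v 0 = 0 ∧ v 1 = 0 := by
          constructor
          · simpa using congrArg Complex.re hw
          · simpa using congrArg Complex.im hw
        refine ⟨0, ⟨le_refl _, by positivity⟩, ?_, ?_⟩
        · simp [hsdef, h0.1, h0.2]
        · simp [hsdef, h0.1, h0.2]
      · set φ0 := Complex.arg ((v 0 : ℂ) + v 1 * Complex.I) with hφ0
        have habs : ‖(v 0 : ℂ) + v 1 * Complex.I‖ = s := by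
          rw [Complex.norm_add_mul_I]
        have hs0 : s ≠ 0 := by
          rw [← habs]; exact norm_ne_zero_iff.mpr hw
        have hre : ((v 0 : ℂ) + v 1 * Complex.I).re = v 0 := by simp
        have him : ((v 0 : ℂ) + v 1 * Complex.I).im = v 1 := by simp
        have hc0 : Real.cos φ0 = v 0 / s := by
          rw [hφ0, Complex.cos_arg hw, hre, habs]
        have hs1 : Real.sin φ0 = v 1 / s := by
          rw [hφ0, Complex.sin_arg, him, habs]
        have hmem := Complex.arg_mem_Ioc ((v 0 : ℂ) + v 1 * Complex.I)
        rw [← hφ0] at hmem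
        have hpi := Real.pi_pos
        by_cases hneg : φ0 < 0
        · refine ⟨φ0 + 2*Real.pi, ⟨by linarith [hmem.1], by linarith [hmem.2]⟩, ?_, ?_⟩
          · rw [Real.cos_add_two_pi, hc0]; field_simp
          · rw [Real.sin_add_two_pi, hs1]; field_simp
        · refine ⟨φ0, ⟨by linarith, by linarith [hmem.2]⟩, ?_, ?_⟩
          · rw [hc0]; field_simp
          · rw [hs1]; field_simp
    refine ⟨θ, hθmem, φ, hφmem, ?_⟩
    rw [hpoint θ φ]
    congr 1
    ext j
    rw [WithLp.equiv_symm_apply, PiLp.toLp_apply]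
    fin_cases j
    · simp [hsin2, hcφ]
    · simp [hsin2, hsφ]
    · simp [hcos2]
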